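/- For the binary erasure eavesdropper channel with erasure probability p ∈ (0,1) (Y = X noiselessly, Z = X with probability 1−p and Z = erasure with probability p, X binary), the message-deniability capacity region {(R,D)} given by: there exists V with V − X − Z, 0 ≤ R ≤ H(X) − (1−p)H(X|V), 0 ≤ D ≤ min(R, p·H(X|V)), equals the region {(R,D) : 0 ≤ R ≤ 1, 0 ≤ D ≤ min(p(1−R)/(1−p), R)}. -/

import Mathlib

open Finset

section PD
variable {Ω α β γ : Type*}

open Classical in
/-- Pushforward distribution of `p` under the random variable `f`. -/
noncomputable def push [Fintype Ω] (p : Ω → ℝ) (f : Ω → α) : α → ℝ :=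
  fun a => ∑ ω, if f ω = a then p ω else 0

/-- Shannon entropy (base 2) of a pmf on a finite alphabet. -/
noncomputable def ent [Fintype α] (q : α → ℝ) : ℝ := -∑ a, q a * Real.logb 2 (q a)

/-- Entropy of a random variable `f` under the distribution `p` on the sample space. -/
noncomputable def H [Fintype Ω] [Fintype α] (p : Ω → ℝ) (f : Ω → α) : ℝ := ent (push p f)

/-- Conditional entropy `H(f | g)`. -/
noncomputable def condH [Fintype Ω] [Fintype α] [Fintype β] (p : Ω → ℝ) (f : Ω → α) (g : Ω → β) : ℝ :=
  H p (fun ω => (f ω, g ω)) - H p g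

/-- Mutual information `I(f ; g)`. -/
noncomputable def mi [Fintype Ω] [Fintype α] [Fintype β] (p : Ω → ℝ) (f : Ω → α) (g : Ω → β) : ℝ :=
  H p f + H p g - H p (fun ω => (f ω, g ω))

/-- Conditional mutual information `I(f ; g | h)`. -/
noncomputable def cmi [Fintype Ω] [Fintype α] [Fintype β] [Fintype γ]
    (p : Ω → ℝ) (f : Ω → α) (g : Ω → β) (h : Ω → γ) : ℝ :=
  condH p f h + condH p g h - condH p (fun ω => (f ω, g ω)) h

/-- `p` is a probability mass function. -/
def IsProb [Fintype Ω] (p : Ω → ℝ) : Prop := (∀ ω, 0 ≤ p ω) ∧ ∑ ω, p ω = 1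

/-- Markov chain `f − g − h`: conditional independence of `f` and `h` given `g`,
expressed as `P(a,b,c)·P(b) = P(a,b)·P(b,c)`. -/
def Markov [Fintype Ω] (p : Ω → ℝ) (f : Ω → α) (g : Ω → β) (h : Ω → γ) : Prop :=
  ∀ a b c, push p (fun ω => (f ω, g ω, h ω)) (a, b, c) * push p g b =
    push p (fun ω => (f ω, g ω)) (a, b) * push p (fun ω => (g ω, h ω)) (b, c)

open Classical in
/-- Kullback–Leibler divergence (base 2), with the sum restricted to the support of `P`. -/
noncomputable def KL [Fintype α] (P Q : α → ℝ) : ℝ :=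
  ∑ a, if 0 < P a then P a * Real.logb 2 (P a / Q a) else 0

end PD

/-- The message-deniability region of the binary erasure eavesdropper channel, as a
union over auxiliary variables `V` with `V − X − Z`:  `Z = X` w.p. `1−p`, `Z = erasure`
w.p. `p` (erasure modelled as `none`), `Y = X` noiselessly. -/
def becRegionAux (pe : ℝ) : Set (ℝ × ℝ) :=
  {rd | ∃ (Ω : Type) (_ : Fintype Ω) (q : Ω → ℝ)
          (VT : Type) (_ : Fintype VT)
          (fX : Ω → Bool) (fZ : Ω → Option Bool) (fV : Ω → VT),
        IsProb q ∧
        (∀ x : Bool,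
          push q (fun ω => (fX ω, fZ ω)) (x, some x) = (1 - pe) * push q fX x ∧
          push q (fun ω => (fX ω, fZ ω)) (x, none) = pe * push q fX x ∧
          push q (fun ω => (fX ω, fZ ω)) (x, some !x) = 0) ∧
        Markov q fV fX fZ ∧
        0 ≤ rd.1 ∧ rd.1 ≤ H q fX - (1 - pe) * condH q fX fV ∧
        0 ≤ rd.2 ∧ rd.2 ≤ min rd.1 (pe * condH q fX fV)}

/-- The same region in closed form. -/
def becRegionClosed (pe : ℝ) : Set (ℝ × ℝ) :=
  {rd | 0 ≤ rd.1 ∧ rd.1 ≤ 1 ∧ 0 ≤ rd.2 ∧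
        rd.2 ≤ min (pe * (1 - rd.1) / (1 - pe)) rd.1}

section Helpers
variable {Ω α β γ : Type*}

lemma push_nonneg' [Fintype Ω] {q : Ω → ℝ} (hq : ∀ ω, 0 ≤ q ω) (f : Ω → α) (a : α) :
    0 ≤ push q f a := by
  classical
  unfold push
  exact Finset.sum_nonneg fun ω _ => by split <;> simp [hq ω]

lemma push_sum' [Fintype Ω] [Fintype α] (q : Ω → ℝ) (f : Ω → α) :
    ∑ a, push q f a = ∑ ω, q ω := by
  classical
  unfold push
  rw [Finset.sum_comm]
  simp

lemma push_snd' [Fintype Ω] [Fintype α] [Fintype β] (q : Ω → ℝ) (f : Ω → α) (g : Ω → β) (b : β) :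
    push q g b = ∑ a, push q (fun ω => (f ω, g ω)) (a, b) := by
  classical
  unfold push
  rw [Finset.sum_comm]
  refine Finset.sum_congr rfl fun ω _ => ?_
  simp [Prod.ext_iff, ite_and]

lemma condH_nonneg' [Fintype Ω] [Fintype α] [Fintype β] {q : Ω → ℝ} (hq : ∀ ω, 0 ≤ q ω)
    (f : Ω → α) (g : Ω → β) : 0 ≤ condH q f g := by
  classical
  have hPn : ∀ a b, 0 ≤ push q (fun ω => (f ω, g ω)) (a, b) := fun a b => push_nonneg' hq _ _
  have key : condH q f g = ∑ b, ∑ a, push q (fun ω => (f ω, g ω)) (a, b) *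
      (Real.logb 2 (push q g b) - Real.logb 2 (push q (fun ω => (f ω, g ω)) (a, b))) := by
    unfold condH H ent
    rw [Fintype.sum_prod_type_right]
    have : ∑ b, push q g b * Real.logb 2 (push q g b)
        = ∑ b, ∑ a, push q (fun ω => (f ω, g ω)) (a, b) * Real.logb 2 (push q g b) := by
      refine Finset.sum_congr rfl fun b _ => ?_
      rw [push_snd' q f g b, Finset.sum_mul]
    rw [this]
    simp only [mul_sub, Finset.sum_sub_distrib]
    ring
  rw [key]
  refine Finset.sum_nonneg fun b _ => Finset.sum_nonneg fun a _ => ?_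
  rcases eq_or_lt_of_le (hPn a b) with h | h
  · rw [← h]; simp
  · refine mul_nonneg (le_of_lt h) (sub_nonneg.2 ?_)
    refine Real.logb_le_logb_of_le (by norm_num) h ?_
    rw [push_snd' q f g b]
    exact Finset.single_le_sum (fun i _ => hPn i b) (mem_univ a)

lemma xlog2x' (x : ℝ) (hx : 0 ≤ x) : x - 1/2 ≤ x * Real.log (2*x) := by
  rcases eq_or_lt_of_le hx with h | h
  · rw [← h]; norm_num
  · have h2 : (0:ℝ) < 2*x := by linarith
    have := Real.log_le_sub_one_of_pos (x := (2*x)⁻¹) (by positivity)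
    rw [Real.log_inv] at this
    have hlog : 1 - (2*x)⁻¹ ≤ Real.log (2*x) := by linarith
    have := mul_le_mul_of_nonneg_left hlog hx
    have hxinv : x * (2*x)⁻¹ = 1/2 := by field_simp
    nlinarith [this]

lemma ent_bool_le_one' {s : Bool → ℝ} (h0 : ∀ x, 0 ≤ s x) (h1 : s true + s false = 1) :
    ent s ≤ 1 := by
  have key : ∀ x : ℝ, 0 ≤ x → x * Real.log (2*x) = x * Real.log 2 + x * Real.log x := by
    intro x hx
    rcases eq_or_lt_of_le hx with h | h
    · simp [← h]
    · rw [Real.log_mul (by norm_num) (ne_of_gt h)]; ring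
  have kt := xlog2x' (s true) (h0 true)
  have kf := xlog2x' (s false) (h0 false)
  rw [key _ (h0 true)] at kt
  rw [key _ (h0 false)] at kf
  have hmul : s true * Real.log 2 + s false * Real.log 2 = Real.log 2 := by
    rw [← add_mul, h1, one_mul]
  have hsum : s true * Real.log (s true) + s false * Real.log (s false) ≥ - Real.log 2 := by
    linarith [kt, kf]
  unfold ent
  rw [Fintype.sum_bool]
  have hl2 : (0:ℝ) < Real.log 2 := Real.log_pos (by norm_num)
  have : s true * Real.logb 2 (s true) + s false * Real.logb 2 (s false)
      = (s true * Real.log (s true) + s false * Real.log (s false)) / Real.log 2 := by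
    unfold Real.logb; ring
  rw [this, neg_le, le_div_iff₀ hl2]
  linarith [hsum]

lemma H_bool_le_one' [Fintype Ω] {q : Ω → ℝ} (hq : IsProb q) (f : Ω → Bool) :
    H q f ≤ 1 := by
  apply ent_bool_le_one' (fun x => push_nonneg' hq.1 f x)
  have := push_sum' q f
  rw [Fintype.sum_bool, hq.2] at this
  exact this

end Helpers

set_option maxHeartbeats 2000000 in
lemma bec_construct (pe e : ℝ) (hp0 : 0 < pe) (hp1 : pe < 1) (he0 : 0 ≤ e) (he1 : e ≤ 1) :
    ∃ (q : Bool × Bool × Bool → ℝ) (fX : Bool × Bool × Bool → Bool)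
      (fZ : Bool × Bool × Bool → Option Bool) (fV : Bool × Bool × Bool → Option Bool),
      IsProb q ∧
      (∀ x : Bool,
        push q (fun ω => (fX ω, fZ ω)) (x, some x) = (1 - pe) * push q fX x ∧
        push q (fun ω => (fX ω, fZ ω)) (x, none) = pe * push q fX x ∧
        push q (fun ω => (fX ω, fZ ω)) (x, some !x) = 0) ∧
      Markov q fV fX fZ ∧ H q fX = 1 ∧ condH q fX fV = e := by
  set q : Bool × Bool × Bool → ℝ :=
    fun ω => (1/2) * (if ω.2.1 then pe else 1-pe) * (if ω.2.2 then e else 1-e) with hqdef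
  set fX : Bool × Bool × Bool → Bool := fun ω => ω.1 with hXdef
  set fZ : Bool × Bool × Bool → Option Bool := fun ω => if ω.2.1 then none else some ω.1 with hZdef
  set fV : Bool × Bool × Bool → Option Bool := fun ω => if ω.2.2 then none else some ω.1 with hVdef
  have hprob : IsProb q := by
    constructor
    · intro ω
      have h1 : (0:ℝ) ≤ (if ω.2.1 then pe else 1-pe) := by split <;> linarith
      have h2 : (0:ℝ) ≤ (if ω.2.2 then e else 1-e) := by split <;> linarith
      simp only [hqdef]; positivity
    · simp [hqdef, Fintype.sum_prod_type, Fintype.sum_bool]; ring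
  have hpushX : ∀ x, push q fX x = 1/2 := by
    intro x
    cases x <;> simp [push, hqdef, hXdef, Fintype.sum_prod_type, Fintype.sum_bool] <;> ring
  have hbec : ∀ x : Bool,
      push q (fun ω => (fX ω, fZ ω)) (x, some x) = (1 - pe) * push q fX x ∧
      push q (fun ω => (fX ω, fZ ω)) (x, none) = pe * push q fX x ∧
      push q (fun ω => (fX ω, fZ ω)) (x, some !x) = 0 := by
    intro x
    cases x <;>
      refine ⟨?_, ?_, ?_⟩ <;>
      simp [push, hqdef, hXdef, hZdef, hpushX, Fintype.sum_prod_type, Fintype.sum_bool] <;> ring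
  have hmkv : Markov q fV fX fZ := by
    intro a b c
    fin_cases a <;> fin_cases b <;> fin_cases c <;>
      simp [push, hqdef, hXdef, hZdef, hVdef, Fintype.sum_prod_type, Fintype.sum_bool] <;> ring
  have hHX : H q fX = 1 := by
    unfold H ent
    rw [Fintype.sum_bool, hpushX, hpushX]
    have : Real.logb 2 (1/2) = -1 := by
      rw [one_div, Real.logb_inv, Real.logb_self_eq_one (by norm_num)]
    rw [this]; ring
  have hXV : ∀ x : Bool, push q (fun ω => (fX ω, fV ω)) (x, some x) = (1-e)/2 ∧
      push q (fun ω => (fX ω, fV ω)) (x, some !x) = 0 ∧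
      push q (fun ω => (fX ω, fV ω)) (x, none) = e/2 := by
    intro x
    cases x <;> refine ⟨?_, ?_, ?_⟩ <;>
      simp [push, hqdef, hXdef, hVdef, Fintype.sum_prod_type, Fintype.sum_bool] <;> ring
  have hV : ∀ x : Bool, push q fV (some x) = (1-e)/2 ∧ push q fV none = e := by
    intro x
    cases x <;> constructor <;>
      simp [push, hqdef, hVdef, Fintype.sum_prod_type, Fintype.sum_bool] <;> ring
  have hcond : condH q fX fV = e := by
    unfold condH H ent
    rw [Fintype.sum_prod_type, Fintype.sum_bool]
    rw [Fintype.sum_option, Fintype.sum_option, Fintype.sum_option, Fintype.sum_bool,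
      Fintype.sum_bool, Fintype.sum_bool]
    have h1 := hXV true; have h2 := hXV false
    have h3 := hV true; have h4 := hV false
    simp only [Bool.not_true, Bool.not_false] at h1 h2
    rw [h1.1, h1.2.1, h1.2.2, h2.1, h2.2.1, h2.2.2, h3.1, h3.2, h4.1]
    rcases eq_or_lt_of_le he0 with h | h
    · rw [← h]; norm_num
    · have hL : Real.logb 2 (e/2) = Real.logb 2 e - 1 := by
        rw [Real.logb_div (ne_of_gt h) (by norm_num), Real.logb_self_eq_one (by norm_num)]
      rw [hL]; ring
  exact ⟨q, fX, fZ, fV, hprob, hbec, hmkv, hHX, hcond⟩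

set_option maxHeartbeats 1000000 in
/-- Example 2 of the paper: for the binary erasure eavesdropper channel
with erasure probability `p ∈ (0,1)`, the message-deniability capacity region equals
`{(R,D) : 0 ≤ R ≤ 1, 0 ≤ D ≤ min(p(1−R)/(1−p), R)}`. -/

theorem bec_region_eq (pe : ℝ) (hpe : pe ∈ Set.Ioo (0 : ℝ) 1) :
    becRegionAux pe = becRegionClosed pe := by
  obtain ⟨hp0, hp1⟩ := hpe
  ext ⟨R, D⟩
  simp only [becRegionAux, becRegionClosed, Set.mem_setOf_eq]
  constructor
  · rintro ⟨Om, _, q, VT, _, fX, fZ, fV, hq, _, _, hR0, hRle, hD0, hDle⟩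
    have ha0 : 0 ≤ condH q fX fV := condH_nonneg' hq.1 fX fV
    have hH1 : H q fX ≤ 1 := H_bool_le_one' hq fX
    set a := condH q fX fV
    have hDR : D ≤ R := hDle.trans (min_le_left _ _)
    have hDpa : D ≤ pe * a := hDle.trans (min_le_right _ _)
    refine ⟨hR0, by nlinarith, hD0, le_min ?_ hDR⟩
    rw [le_div_iff₀ (by linarith : (0:ℝ) < 1 - pe)]
    have h6 : (1-pe)*a ≤ 1 - R := by linarith [hH1]
    nlinarith [mul_le_mul_of_nonneg_left h6 (le_of_lt hp0),
      mul_le_mul_of_nonneg_right hDpa (by linarith : (0:ℝ) ≤ 1-pe)]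
  · rintro ⟨hR0, hR1, hD0, hDle⟩
    have hDR : D ≤ R := hDle.trans (min_le_right _ _)
    have hDd : D ≤ pe * (1 - R) / (1 - pe) := hDle.trans (min_le_left _ _)
    have hDd' : D * (1 - pe) ≤ pe * (1 - R) :=
      (le_div_iff₀ (by linarith : (0:ℝ) < 1 - pe)).mp hDd
    obtain ⟨e, he0, he1, heD, hkey⟩ : ∃ e : ℝ, 0 ≤ e ∧ e ≤ 1 ∧ pe * e = D ∧
        (1 - pe) * e ≤ 1 - R := by
      refine ⟨D / pe, div_nonneg hD0 (le_of_lt hp0), ?_, by field_simp, ?_⟩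
      · rw [div_le_one hp0]
        rcases le_or_gt R pe with h | h
        · linarith
        · nlinarith
      · rw [mul_div_assoc', div_le_iff₀ hp0]
        nlinarith
    obtain ⟨q, fX, fZ, fV, hprob, hbec, hmkv, hHX, hcond⟩ :=
      bec_construct pe e hp0 hp1 he0 he1
    refine ⟨Bool × Bool × Bool, inferInstance, q, Option Bool, inferInstance,
      fX, fZ, fV, hprob, hbec, hmkv, hR0, ?_, hD0, ?_⟩
    · rw [hHX, hcond]
      linarith
    · rw [hcond, heD]
      exact le_min hDR le_rfl
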